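/- A complete simple game with t = 2 equivalence classes and unique shift-minimal winning type (m_1, 1) (i.e., m_2 = 1) is weighted: assigning weight n_2 to each player of class 1 and weight 1 to each player of class 2 with quota m_1·n_2 + 1 represents the game. -/
import Mathlib

/-- A complete simple game with `t = 2` classes and unique shift-minimal winning
type `(m1, 1)` is weighted by weights `(n2, 1)` with quota `m1 * n2 + 1`. -/
theorem stmt13 (n1 n2 m1 : ℕ) (h1 : 1 ≤ m1) (h2 : m1 ≤ n1) (h3 : 2 ≤ n2) :
    ∀ x y x' y' : ℕ, x ≤ n1 → y ≤ n2 → x' ≤ n1 → y' ≤ n2 →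
      (m1 ≤ x ∧ m1 + 1 ≤ x + y) → ¬ (m1 ≤ x' ∧ m1 + 1 ≤ x' + y') →
      m1 * n2 + 1 ≤ x * n2 + y ∧ x' * n2 + y' < m1 * n2 + 1 := by
  intro x y x' y' hx hy hx' hy' ⟨hw1, hw2⟩ hl
  constructor
  · rcases Nat.lt_or_ge m1 x with h | h
    · nlinarith
    · have : x = m1 := le_antisymm h hw1
      subst this; omega
  · push_neg at hl
    rcases Nat.lt_or_ge x' m1 with h | h
    · nlinarith
    · have := hl h
      nlinarith
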